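/- Let L_T be twice continuously differentiable with ∂L_T/∂θ(ψ, θ*(ψ)) = 0 and invertible Hessian H = ∂²L_T/∂θ∂θᵀ at (ψ, θ*(ψ)), and let L_V be continuously differentiable. If g₁ = ∂L_V/∂ψ, g₂ = ∂L_V/∂θ, P = ∂²L_T/∂θ∂ψᵀ, and v solves v·H = g₂, then the total derivative of ψ ↦ L_V(ψ, θ*(ψ)) equals g₁ − v·P. -/

import Mathlib

open Matrix

/-- The `i`-th partial derivative of a loss in the second (adapted) argument. -/
noncomputable def gradθ {m n : ℕ} (L : (Fin m → ℝ) × (Fin n → ℝ) → ℝ)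
    (ψ : Fin m → ℝ) (θ : Fin n → ℝ) (i : Fin n) : ℝ :=
  fderiv ℝ (fun θ' => L (ψ, θ')) θ (Pi.single i 1)

/-- Hessian `∂²L/∂θ∂θᵀ` evaluated at `(ψ, θ)`. -/
noncomputable def hessθθ {m n : ℕ} (L : (Fin m → ℝ) × (Fin n → ℝ) → ℝ)
    (ψ : Fin m → ℝ) (θ : Fin n → ℝ) : Matrix (Fin n) (Fin n) ℝ :=
  fun i j => fderiv ℝ (fun θ' => gradθ L ψ θ' i) θ (Pi.single j 1)

/-- Mixed second derivatives `∂²L/∂θ∂ψᵀ` evaluated at `(ψ, θ)`. -/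
noncomputable def hessθψ {m n : ℕ} (L : (Fin m → ℝ) × (Fin n → ℝ) → ℝ)
    (ψ : Fin m → ℝ) (θ : Fin n → ℝ) : Matrix (Fin n) (Fin m) ℝ :=
  fun i j => fderiv ℝ (fun ψ' => gradθ L ψ' θ i) ψ (Pi.single j 1)

lemma pderiv_snd {m n : ℕ} (f : (Fin m → ℝ) × (Fin n → ℝ) → ℝ)
    (x : Fin m → ℝ) (y : Fin n → ℝ) (hf : DifferentiableAt ℝ f (x, y)) (e : Fin n → ℝ) :
    fderiv ℝ (fun y' => f (x, y')) y e = fderiv ℝ f (x, y) (0, e) := by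
  have h1 : HasFDerivAt (fun y' => (x, y')) (ContinuousLinearMap.inr ℝ (Fin m → ℝ) (Fin n → ℝ)) y :=
    hasFDerivAt_prodMk_right x y
  rw [show (fun y' => f (x, y')) = f ∘ (fun y' => (x, y')) from rfl,
    (hf.hasFDerivAt.comp y h1).fderiv]
  rfl

lemma pderiv_fst {m n : ℕ} (f : (Fin m → ℝ) × (Fin n → ℝ) → ℝ)
    (x : Fin m → ℝ) (y : Fin n → ℝ) (hf : DifferentiableAt ℝ f (x, y)) (e : Fin m → ℝ) :
    fderiv ℝ (fun x' => f (x', y)) x e = fderiv ℝ f (x, y) (e, 0) := by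
  have h1 : HasFDerivAt (fun x' => (x', y)) (ContinuousLinearMap.inl ℝ (Fin m → ℝ) (Fin n → ℝ)) x :=
    hasFDerivAt_prodMk_left x y
  rw [show (fun x' => f (x', y)) = f ∘ (fun x' => (x', y)) from rfl,
    (hf.hasFDerivAt.comp x h1).fderiv]
  rfl

lemma clm_pi_apply {n : ℕ} (ℓ : (Fin n → ℝ) →L[ℝ] ℝ) (w : Fin n → ℝ) :
    ℓ w = ∑ k, w k * ℓ (Pi.single k 1) := by
  conv_lhs => rw [← Finset.univ_sum_single w]
  rw [map_sum]
  congr 1; ext k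
  have h : (Pi.single k (w k) : Fin n → ℝ) = w k • (Pi.single k 1 : Fin n → ℝ) := by
    ext j; by_cases h : j = k <;> simp [h, Pi.single_apply]
  rw [h, ℓ.map_smul, smul_eq_mul]

/-- Correctness of Algorithm 1 (ADKF-IFT): with `g₁ = ∂L_V/∂ψ`,
`g₂ = ∂L_V/∂θ`, `P = ∂²L_T/∂θ∂ψᵀ`, `H = ∂²L_T/∂θ∂θᵀ` invertible,
stationarity `∂L_T/∂θ(ψ', θ*(ψ')) = 0` near `ψ`, and `v` solving `v·H = g₂`,
the total derivative of `ψ' ↦ L_V(ψ', θ*(ψ'))` at `ψ` equals `g₁ − v·P`. -/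
theorem stmt_3 {m n : ℕ} (LT LV : (Fin m → ℝ) × (Fin n → ℝ) → ℝ)
    (hLT : ContDiff ℝ 2 LT) (hLV : ContDiff ℝ 1 LV)
    (U : Set (Fin m → ℝ)) (hU : IsOpen U) (ψ : Fin m → ℝ) (hψ : ψ ∈ U)
    (θs : (Fin m → ℝ) → (Fin n → ℝ)) (hθs : ContDiffOn ℝ 1 θs U)
    (hstat : ∀ ψ' ∈ U, ∀ i, gradθ LT ψ' (θs ψ') i = 0)
    (hHess : IsUnit (hessθθ LT ψ (θs ψ)).det)
    (g₁ : Fin m → ℝ)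
    (hg₁ : ∀ j, g₁ j = fderiv ℝ (fun ψ' => LV (ψ', θs ψ)) ψ (Pi.single j 1))
    (g₂ : Fin n → ℝ)
    (hg₂ : ∀ i, g₂ i = fderiv ℝ (fun θ => LV (ψ, θ)) (θs ψ) (Pi.single i 1))
    (v : Fin n → ℝ) (hv : v ᵥ* hessθθ LT ψ (θs ψ) = g₂) :
    ∀ j, fderiv ℝ (fun ψ' => LV (ψ', θs ψ')) ψ (Pi.single j 1)
        = g₁ j - (v ᵥ* hessθψ LT ψ (θs ψ)) j := by
  intro j
  set θ₀ := θs ψ with hθ₀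
  -- differentiability of θs at ψ
  have hθd : DifferentiableAt ℝ θs ψ :=
    ((hθs.contDiffAt (hU.mem_nhds hψ)).differentiableAt one_ne_zero)
  set T := fderiv ℝ θs ψ with hT
  have hγ : HasFDerivAt (fun ψ' => (ψ', θs ψ'))
      ((ContinuousLinearMap.id ℝ (Fin m → ℝ)).prod T) ψ :=
    HasFDerivAt.prodMk (hasFDerivAt_id ψ) hθd.hasFDerivAt
  have hLTd : Differentiable ℝ LT := hLT.differentiable (by norm_num)
  -- gradθ as full-derivative evaluation
  have grad_eq : ∀ (x : Fin m → ℝ) (y : Fin n → ℝ) (i : Fin n),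
      gradθ LT x y i = fderiv ℝ LT (x, y) (0, Pi.single i 1) := fun x y i =>
    pderiv_snd LT x y (hLTd (x, y)) _
  -- K i : the i-th component of ∇θ LT as function of the joint point
  set K : Fin n → ((Fin m → ℝ) × (Fin n → ℝ)) → ℝ :=
    fun i p => fderiv ℝ LT p (0, Pi.single i 1) with hK
  have hKc : ∀ i, ContDiff ℝ 1 (K i) := fun i =>
    (hLT.fderiv_right (le_refl 2)).clm_apply contDiff_const
  have hKd : ∀ i p, DifferentiableAt ℝ (K i) p := fun i p =>
    ((hKc i).differentiable one_ne_zero) p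
  set DK : Fin n → ((Fin m → ℝ) × (Fin n → ℝ)) →L[ℝ] ℝ :=
    fun i => fderiv ℝ (K i) (ψ, θ₀) with hDK
  -- Hessian entries via DK
  have hPθψ : ∀ i j', hessθψ LT ψ θ₀ i j' = DK i (Pi.single j' 1, 0) := by
    intro i j'
    unfold hessθψ
    simp only [grad_eq]
    exact pderiv_fst (K i) ψ θ₀ (hKd i _) _
  have hPθθ : ∀ i k, hessθθ LT ψ θ₀ i k = DK i (0, Pi.single k 1) := by
    intro i k
    unfold hessθθ
    simp only [grad_eq]
    exact pderiv_snd (K i) ψ θ₀ (hKd i _) _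
  -- derivative of stationarity
  have hstatD : ∀ i, DK i (Pi.single j 1, T (Pi.single j 1)) = 0 := by
    intro i
    have hcomp : HasFDerivAt (fun ψ' => K i (ψ', θs ψ'))
        ((DK i).comp ((ContinuousLinearMap.id ℝ (Fin m → ℝ)).prod T)) ψ :=
      HasFDerivAt.comp (g := K i) ψ (hKd i (ψ, θ₀)).hasFDerivAt hγ
    have hzero : (fun ψ' => K i (ψ', θs ψ')) =ᶠ[nhds ψ] fun _ => (0 : ℝ) := by
      filter_upwards [hU.mem_nhds hψ] with x hx
      show fderiv ℝ LT (x, θs x) (0, Pi.single i 1) = 0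
      rw [← grad_eq]; exact hstat x hx i
    have h1 : fderiv ℝ (fun ψ' => K i (ψ', θs ψ')) ψ =
        (DK i).comp ((ContinuousLinearMap.id ℝ (Fin m → ℝ)).prod T) := hcomp.fderiv
    have h2 : fderiv ℝ (fun ψ' => K i (ψ', θs ψ')) ψ = 0 := by
      rw [hzero.fderiv_eq]; simp
    have := h1.symm.trans h2
    have := congrFun (congrArg DFunLike.coe this) (Pi.single j 1)
    simpa using this
  -- expand DK i on second slot
  have hsplit : ∀ i, DK i (Pi.single j 1, T (Pi.single j 1))
      = DK i (Pi.single j 1, 0) + DK i (0, T (Pi.single j 1)) := by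
    intro i
    rw [← map_add]
    congr 1
    simp [Prod.ext_iff]
  have hDK2 : ∀ (ℓ : ((Fin m → ℝ) × (Fin n → ℝ)) →L[ℝ] ℝ) (w : Fin n → ℝ),
      ℓ (0, w) = ∑ k, w k * ℓ (0, Pi.single k 1) := by
    intro ℓ w
    have := clm_pi_apply (ℓ.comp (ContinuousLinearMap.inr ℝ (Fin m → ℝ) (Fin n → ℝ))) w
    simpa using this
  -- so hessθψ entries
  have hPval : ∀ i, hessθψ LT ψ θ₀ i j
      = - ∑ k, T (Pi.single j 1) k * hessθθ LT ψ θ₀ i k := by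
    intro i
    have h0 := hstatD i
    rw [hsplit i] at h0
    have : DK i (Pi.single j 1, 0) = - DK i (0, T (Pi.single j 1)) := by linarith
    rw [hPθψ, this, hDK2]
    congr 1
    refine Finset.sum_congr rfl fun k _ => ?_
    rw [hPθθ]
  -- the LV side
  have hLVd : DifferentiableAt ℝ LV (ψ, θ₀) := (hLV.differentiable one_ne_zero) (ψ, θ₀)
  set D := fderiv ℝ LV (ψ, θ₀) with hD
  have hg₁' : g₁ j = D (Pi.single j 1, 0) := by
    rw [hg₁ j]; exact pderiv_fst LV ψ θ₀ hLVd _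
  have hg₂' : ∀ i, g₂ i = D (0, Pi.single i 1) := by
    intro i; rw [hg₂ i]; exact pderiv_snd LV ψ θ₀ hLVd _
  -- total derivative
  have hcompV : HasFDerivAt (fun ψ' => LV (ψ', θs ψ'))
      (D.comp ((ContinuousLinearMap.id ℝ (Fin m → ℝ)).prod T)) ψ :=
    hLVd.hasFDerivAt.comp ψ hγ
  have hLHS : fderiv ℝ (fun ψ' => LV (ψ', θs ψ')) ψ (Pi.single j 1)
      = D (Pi.single j 1, T (Pi.single j 1)) := by
    rw [hcompV.fderiv]; rfl
  have hDsplit : D (Pi.single j 1, T (Pi.single j 1))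
      = D (Pi.single j 1, 0) + D (0, T (Pi.single j 1)) := by
    rw [← map_add]; congr 1; simp [Prod.ext_iff]
  -- vecMul expansions
  have hvk : ∀ k, ∑ i, v i * hessθθ LT ψ θ₀ i k = g₂ k := by
    intro k
    have := congrFun hv k
    simpa [Matrix.vecMul, dotProduct] using this
  have hRHS : (v ᵥ* hessθψ LT ψ θ₀) j = - ∑ k, T (Pi.single j 1) k * g₂ k := by
    have : (v ᵥ* hessθψ LT ψ θ₀) j = ∑ i, v i * hessθψ LT ψ θ₀ i j := by
      simp [Matrix.vecMul, dotProduct]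
    rw [this]
    calc ∑ i, v i * hessθψ LT ψ θ₀ i j
        = ∑ i, v i * (- ∑ k, T (Pi.single j 1) k * hessθθ LT ψ θ₀ i k) := by
          refine Finset.sum_congr rfl fun i _ => by rw [hPval i]
      _ = - ∑ i, ∑ k, T (Pi.single j 1) k * (v i * hessθθ LT ψ θ₀ i k) := by
          rw [← Finset.sum_neg_distrib]
          refine Finset.sum_congr rfl fun i _ => ?_
          rw [mul_neg, Finset.mul_sum]
          congr 1
          refine Finset.sum_congr rfl fun k _ => by ring
      _ = - ∑ k, T (Pi.single j 1) k * ∑ i, v i * hessθθ LT ψ θ₀ i k := by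
          rw [Finset.sum_comm]
          congr 1
          refine Finset.sum_congr rfl fun k _ => by rw [Finset.mul_sum]
      _ = - ∑ k, T (Pi.single j 1) k * g₂ k := by
          congr 1; exact Finset.sum_congr rfl fun k _ => by rw [hvk k]
  rw [hLHS, hDsplit, hRHS, ← hg₁', hDK2 D]
  have : ∑ k, T (Pi.single j 1) k * D (0, Pi.single k 1)
      = ∑ k, T (Pi.single j 1) k * g₂ k := by
    exact Finset.sum_congr rfl fun k _ => by rw [hg₂' k]
  rw [this]
  ring
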